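/- If X and Y are independent random variables uniformly distributed on finite subsets A and B of the integers, then N(X + Y) + 1 ≥ N(X) + N(Y), where N(X) = e^{2H(X)} and H is Shannon entropy. -/

import Mathlib

/-- Convolution of two functions on `ℤ`. -/
noncomputable def convZ (f g : ℤ → ℝ) : ℤ → ℝ := fun k => ∑' i : ℤ, f i * g (k - i)

/-- Shannon entropy of a probability mass function on `ℤ`. -/
noncomputable def entZ (f : ℤ → ℝ) : ℝ := ∑' i : ℤ, Real.negMulLog (f i)

/-- The uniform probability mass function on a finite subset of `ℤ`. -/
noncomputable def unif (A : Finset ℤ) : ℤ → ℝ :=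
  fun i => if i ∈ A then ((A.card : ℝ))⁻¹ else 0

open Finset

section OrderCount
variable {α : Type*} [LinearOrder α] [DecidableEq α]

private lemma image_eq_range (S : Finset α) (f : α → ℕ)
    (hinj : Set.InjOn f S) (hlt : ∀ x ∈ S, f x < S.card) :
    S.image f = Finset.range S.card := by
  apply Finset.eq_of_subset_of_card_le
  · intro n hn
    simp only [mem_image] at hn
    obtain ⟨x, hx, rfl⟩ := hn
    exact mem_range.mpr (hlt x hx)
  · rw [Finset.card_range, Finset.card_image_of_injOn hinj]

private lemma count_ge_aux (S : Finset α) (f : α → ℕ)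
    (hinj : Set.InjOn f S) (hlt : ∀ x ∈ S, f x < S.card) (s : ℕ) :
    (S.filter fun x => s ≤ f x).card = S.card - s := by
  have h1 : (S.filter fun x => s ≤ f x).card = ((S.filter fun x => s ≤ f x).image f).card := by
    rw [Finset.card_image_of_injOn (hinj.mono (by exact_mod_cast Finset.filter_subset _ _))]
  rw [h1]
  have h2 : (S.filter fun x => s ≤ f x).image f = (S.image f).filter fun n => s ≤ n := by
    rw [Finset.filter_image]
  rw [h2, image_eq_range S f hinj hlt]
  have h3 : (Finset.range S.card).filter (fun n => s ≤ n) = Finset.Ico s S.card := by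
    ext n; simp only [Finset.mem_filter, Finset.mem_range, Finset.mem_Ico]; omega
  rw [h3, Nat.card_Ico]

/-- In a finite linearly ordered set, the number of elements having at least `s`
strictly greater elements is `card - s`. -/
lemma count_many_gt (S : Finset α) (s : ℕ) :
    (S.filter fun x => s ≤ (S.filter fun z => x < z).card).card = S.card - s := by
  apply count_ge_aux
  · intro x hx y hy hxy
    simp only [Finset.mem_coe] at hx hy
    simp only at hxy
    by_contra hne
    rcases lt_or_gt_of_ne hne with h | h
    · have : (S.filter fun z => y < z) ⊂ (S.filter fun z => x < z) := by
        constructor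
        · intro z hz; simp only [mem_filter] at *; exact ⟨hz.1, h.trans hz.2⟩
        · intro hsub
          have : y ∈ S.filter fun z => x < z := by simp [hy, h]
          have := hsub this
          simp at this
      have := Finset.card_lt_card this
      omega
    · have : (S.filter fun z => x < z) ⊂ (S.filter fun z => y < z) := by
        constructor
        · intro z hz; simp only [mem_filter] at *; exact ⟨hz.1, h.trans hz.2⟩
        · intro hsub
          have : x ∈ S.filter fun z => y < z := by simp [hx, h]
          have := hsub this
          simp at this
      have := Finset.card_lt_card this
      omega
  · intro x hx
    have hsub : (S.filter fun z => x < z) ⊆ S.erase x := by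
      intro z hz; simp only [mem_filter] at hz
      exact Finset.mem_erase.mpr ⟨ne_of_gt hz.2, hz.1⟩
    calc (S.filter fun z => x < z).card ≤ (S.erase x).card := Finset.card_le_card hsub
      _ < S.card := by
          rw [Finset.card_erase_of_mem hx]
          have : 0 < S.card := Finset.card_pos.mpr ⟨x, hx⟩
          omega

/-- Dual version: elements having at least `s` strictly smaller elements. -/
lemma count_many_lt (S : Finset α) (s : ℕ) :
    (S.filter fun x => s ≤ (S.filter fun z => z < x).card).card = S.card - s := by
  apply count_ge_aux
  · intro x hx y hy hxy
    simp only [Finset.mem_coe] at hx hy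
    simp only at hxy
    by_contra hne
    rcases lt_or_gt_of_ne hne with h | h
    · have : (S.filter fun z => z < x) ⊂ (S.filter fun z => z < y) := by
        constructor
        · intro z hz; simp only [mem_filter] at *; exact ⟨hz.1, hz.2.trans h⟩
        · intro hsub
          have : x ∈ S.filter fun z => z < y := by simp [hx, h]
          have := hsub this
          simp at this
      have := Finset.card_lt_card this
      omega
    · have : (S.filter fun z => z < y) ⊂ (S.filter fun z => z < x) := by
        constructor
        · intro z hz; simp only [mem_filter] at *; exact ⟨hz.1, hz.2.trans h⟩
        · intro hsub
          have : y ∈ S.filter fun z => z < x := by simp [hy, h]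
          have := hsub this
          simp at this
      have := Finset.card_lt_card this
      omega
  · intro x hx
    have hsub : (S.filter fun z => z < x) ⊆ S.erase x := by
      intro z hz; simp only [mem_filter] at hz
      exact Finset.mem_erase.mpr ⟨ne_of_lt hz.2, hz.1⟩
    calc (S.filter fun z => z < x).card ≤ (S.erase x).card := Finset.card_le_card hsub
      _ < S.card := by
          rw [Finset.card_erase_of_mem hx]
          have : 0 < S.card := Finset.card_pos.mpr ⟨x, hx⟩
          omega

end OrderCount

open Finset Pointwise

/-- number of representations of `k` as a sum of an element of `A` and an element of `B` -/
def repr' (A B : Finset ℤ) (k : ℤ) : ℕ := (A.filter fun x => k - x ∈ B).card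

lemma repr_le (A B : Finset ℤ) (k : ℤ) : repr' A B k ≤ A.card :=
  Finset.card_le_card (Finset.filter_subset _ _)

lemma repr_pos (A B : Finset ℤ) (k : ℤ) (hk : k ∈ A + B) : 1 ≤ repr' A B k := by
  rw [Finset.mem_add] at hk
  obtain ⟨x, hx, y, hy, rfl⟩ := hk
  apply Finset.card_pos.mpr
  exact ⟨x, by simp [hx, hy]⟩

lemma repr_eq_fiber (A B : Finset ℤ) (k : ℤ) :
    ((A ×ˢ B).filter fun p => p.1 + p.2 = k).card = repr' A B k := by
  apply Finset.card_bij (fun p _ => p.1)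
  · rintro ⟨x, y⟩ hp
    simp only [Finset.mem_filter, Finset.mem_product] at hp
    simp only [repr', Finset.mem_filter]
    exact ⟨hp.1.1, by rw [← hp.2]; simpa using hp.1.2⟩
  · rintro ⟨x, y⟩ hp ⟨x', y'⟩ hp' h
    simp only [Finset.mem_filter, Finset.mem_product] at hp hp'
    simp only at h
    subst h
    have : y = y' := by omega
    simp [this]
  · intro x hx
    simp only [repr', Finset.mem_filter] at hx
    exact ⟨(x, k - x), by simp [Finset.mem_filter, hx.1, hx.2], rfl⟩

lemma sum_repr (A B : Finset ℤ) :
    ∑ k ∈ A + B, repr' A B k = A.card * B.card := by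
  have h := Finset.card_eq_sum_card_fiberwise
    (f := fun (p : ℤ × ℤ) => p.1 + p.2) (s := A ×ˢ B) (t := A + B)
    (fun p hp => by
      rw [Finset.mem_coe, Finset.mem_product] at hp
      exact Finset.add_mem_add hp.1 hp.2)
  rw [Finset.card_product] at h
  rw [h]
  exact Finset.sum_congr rfl fun k _ => (repr_eq_fiber A B k).symm

/-- Pollard-type bound: `∑_k (r_k - s)⁺ ≤ (|A| - s)(|B| - s)`. -/
lemma sum_repr_sub_le (A B : Finset ℤ) (s : ℕ) :
    ∑ k ∈ A + B, (repr' A B k - s) ≤ (A.card - s) * (B.card - s) := by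
  classical
  -- the set of "deep" pairs
  set P : ℤ × ℤ → Prop :=
    fun p => s ≤ ((A.filter fun z => (p.1 + p.2) - z ∈ B ∧ p.1 < z).card) with hP
  -- step 1: ∑_k (r_k - s) = card of deep pairs
  have step1 : ∑ k ∈ A + B, (repr' A B k - s) = ((A ×ˢ B).filter P).card := by
    have h := Finset.card_eq_sum_card_fiberwise
      (f := fun (p : ℤ × ℤ) => p.1 + p.2) (s := (A ×ˢ B).filter P) (t := A + B)
      (fun p hp => by
        rw [Finset.mem_coe, Finset.mem_filter, Finset.mem_product] at hp
        exact Finset.add_mem_add hp.1.1 hp.1.2)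
    rw [h]
    apply Finset.sum_congr rfl
    intro k hk
    -- fiber over k has card (r_k - s) via the order-count lemma on T_k
    set T : Finset ℤ := A.filter fun x => k - x ∈ B with hT
    have hTcard : T.card = repr' A B k := rfl
    have horder := count_many_gt T s
    rw [hTcard] at horder
    rw [← horder]
    symm
    -- bijection p ↦ p.1
    apply Finset.card_bij (fun p _ => p.1)
    · rintro ⟨x, y⟩ hp
      simp only [Finset.mem_filter, Finset.mem_product, hP] at hp
      obtain ⟨⟨⟨hxA, hyB⟩, hdeep⟩, hsum⟩ := hp
      simp only [Finset.mem_filter, hT]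
      refine ⟨⟨hxA, by rw [← hsum]; simpa using hyB⟩, ?_⟩
      · refine le_trans hdeep (Finset.card_le_card ?_)
        intro z hz
        simp only [Finset.mem_filter] at hz ⊢
        rw [hsum] at hz
        exact ⟨⟨hz.1, hz.2.1⟩, hz.2.2⟩
    · rintro ⟨x, y⟩ hp ⟨x', y'⟩ hp' h
      simp only [Finset.mem_filter, Finset.mem_product] at hp hp'
      simp only at h
      subst h
      have : y = y' := by have := hp.2; have := hp'.2; omega
      simp [this]
    · intro x hx
      simp only [Finset.mem_filter, hT] at hx
      refine ⟨(x, k - x), ?_, rfl⟩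
      simp only [Finset.mem_filter, Finset.mem_product, hP]
      refine ⟨⟨⟨hx.1.1, hx.1.2⟩, ?_⟩, by ring⟩
      refine le_trans hx.2 (Finset.card_le_card ?_)
      intro z hz
      simp only [Finset.mem_filter, hT] at hz ⊢
      have : x + (k - x) - z = k - z := by ring
      rw [this]
      exact ⟨hz.1.1, hz.1.2, hz.2⟩
  -- step 2: deep pairs inject into A_low ×ˢ B_high
  set Alow : Finset ℤ := A.filter fun x => s ≤ (A.filter fun z => x < z).card with hAlow
  set Bhigh : Finset ℤ := B.filter fun y => s ≤ (B.filter fun z => z < y).card with hBhigh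
  have step2 : (A ×ˢ B).filter P ⊆ Alow ×ˢ Bhigh := by
    rintro ⟨x, y⟩ hp
    simp only [Finset.mem_filter, Finset.mem_product, hP] at hp
    obtain ⟨⟨hxA, hyB⟩, hdeep⟩ := hp
    simp only [Finset.mem_product, hAlow, hBhigh, Finset.mem_filter]
    constructor
    · refine ⟨hxA, le_trans hdeep (Finset.card_le_card ?_)⟩
      intro z hz
      simp only [Finset.mem_filter] at hz ⊢
      exact ⟨hz.1, hz.2.2⟩
    · refine ⟨hyB, le_trans hdeep ?_⟩
      apply Finset.card_le_card_of_injOn (fun z => x + y - z)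
      · intro z hz
        simp only [Finset.mem_coe, Finset.mem_filter] at hz ⊢
        exact ⟨hz.2.1, by omega⟩
      · intro z _ z' _ h
        simp only at h
        omega
  calc ∑ k ∈ A + B, (repr' A B k - s) = ((A ×ˢ B).filter P).card := step1
    _ ≤ (Alow ×ˢ Bhigh).card := Finset.card_le_card step2
    _ = (A.card - s) * (B.card - s) := by
        rw [Finset.card_product, hAlow, hBhigh, count_many_gt, count_many_lt]

open Finset Pointwise

noncomputable def gg (n : ℕ) : ℝ := n * Real.log n
noncomputable def cc (t : ℕ) : ℝ := gg (t + 2) - 2 * gg (t + 1) + gg t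

lemma gg_zero : gg 0 = 0 := by simp [gg]
lemma gg_one : gg 1 = 0 := by simp [gg]

lemma cc_nonneg (t : ℕ) : 0 ≤ cc t := by
  have h := Real.convexOn_mul_log.2 (Set.mem_Ici.mpr (by positivity : (0:ℝ) ≤ (t:ℝ)))
    (Set.mem_Ici.mpr (by positivity : (0:ℝ) ≤ (t:ℝ) + 2))
    (by norm_num : (0:ℝ) ≤ 1/2) (by norm_num : (0:ℝ) ≤ 1/2) (by norm_num)
  have hmid : (1/2 : ℝ) • (t:ℝ) + (1/2 : ℝ) • ((t:ℝ) + 2) = (t:ℝ) + 1 := by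
    simp [smul_eq_mul]; ring
  rw [hmid] at h
  simp only [smul_eq_mul] at h
  have e1 : gg (t+2) = ((t:ℝ) + 2) * Real.log ((t:ℝ) + 2) := by unfold gg; push_cast; ring
  have e2 : gg (t+1) = ((t:ℝ) + 1) * Real.log ((t:ℝ) + 1) := by unfold gg; push_cast; ring
  have e3 : gg t = (t:ℝ) * Real.log (t:ℝ) := by simp [gg]
  simp only [cc, e1, e2, e3]
  linarith

lemma sum_cc (n : ℕ) : ∑ t ∈ Finset.range n, cc t = gg (n+1) - gg n := by
  have h := Finset.sum_range_sub (fun t => gg (t+1) - gg t) n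
  have : ∀ t, cc t = (fun t => gg (t+1) - gg t) (t+1) - (fun t => gg (t+1) - gg t) t := by
    intro t; simp only [cc]; ring
  calc ∑ t ∈ Finset.range n, cc t
      = ∑ t ∈ Finset.range n, ((fun t => gg (t+1) - gg t) (t+1) - (fun t => gg (t+1) - gg t) t) :=
        Finset.sum_congr rfl (fun t _ => this t)
    _ = (gg (n+1) - gg n) - (gg 1 - gg 0) := by rw [h]
    _ = gg (n+1) - gg n := by rw [gg_zero, gg_one]; ring

lemma ident (m : ℕ) : ∀ r : ℕ, r ≤ m + 1 →
    ∑ t ∈ Finset.range m, cc t * ((r - 1 - t : ℕ) : ℝ) = gg r := by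
  intro r
  induction r with
  | zero => intro _; simp [gg_zero]
  | succ n ih =>
    intro h
    have hn : n ≤ m := by omega
    have key : ∀ t : ℕ, ((n + 1 - 1 - t : ℕ) : ℝ) = ((n - 1 - t : ℕ) : ℝ) + (if t < n then 1 else 0) := by
      intro t
      rcases lt_or_ge t n with h' | h'
      · have e : n + 1 - 1 - t = (n - 1 - t) + 1 := by omega
        rw [e]; push_cast; simp [h']
      · have e1 : n + 1 - 1 - t = 0 := by omega
        have e2 : n - 1 - t = 0 := by omega
        rw [e1, e2]; simp [Nat.not_lt.mpr h']
    calc ∑ t ∈ Finset.range m, cc t * ((n + 1 - 1 - t : ℕ) : ℝ)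
        = ∑ t ∈ Finset.range m, (cc t * ((n - 1 - t : ℕ) : ℝ) + cc t * (if t < n then 1 else 0)) := by
          refine Finset.sum_congr rfl fun t _ => ?_
          rw [key t]; ring
      _ = gg n + ∑ t ∈ Finset.range m, (if t < n then cc t else 0) := by
          rw [Finset.sum_add_distrib, ih (by omega)]
          congr 1
          refine Finset.sum_congr rfl fun t _ => ?_
          by_cases h' : t < n <;> simp [h']
      _ = gg n + ∑ t ∈ (Finset.range m).filter (fun t => t < n), cc t := by
          rw [Finset.sum_filter]
      _ = gg n + ∑ t ∈ Finset.range n, cc t := by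
          congr 2
          ext t; simp; omega
      _ = gg (n+1) := by rw [sum_cc]; ring

lemma phi_diag : ∀ a : ℕ, 1 ≤ a →
    ∑ t ∈ Finset.range (a-1), cc t * ((a-1-t : ℕ) : ℝ)^2 = 2 * ∑ j ∈ Finset.range a, gg j + gg a := by
  intro a
  induction a with
  | zero => intro h; omega
  | succ n ih =>
    intro _
    rcases Nat.eq_or_lt_of_le (by omega : 1 ≤ n + 1) with h1 | h1
    · -- n = 0
      have : n = 0 := by omega
      subst this
      simp [gg_zero, gg_one]
    · -- n ≥ 1
      have hn : 1 ≤ n := by omega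
      have ihn := ih hn
      have e0 : n + 1 - 1 = n := by omega
      rw [e0]
      have key : ∀ t ∈ Finset.range n, cc t * ((n - t : ℕ) : ℝ)^2
          = cc t * ((n - 1 - t : ℕ) : ℝ)^2 + 2 * (cc t * ((n - 1 - t : ℕ) : ℝ)) + cc t := by
        intro t ht
        simp only [Finset.mem_range] at ht
        have e : n - t = (n - 1 - t) + 1 := by omega
        rw [e]; push_cast; ring
      rw [Finset.sum_congr rfl key]
      rw [Finset.sum_add_distrib, Finset.sum_add_distrib]
      have eS1 : ∑ t ∈ Finset.range n, cc t * ((n - 1 - t : ℕ) : ℝ)^2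
          = ∑ t ∈ Finset.range (n-1), cc t * ((n - 1 - t : ℕ) : ℝ)^2 := by
        symm
        apply Finset.sum_subset
        · intro t ht; simp only [Finset.mem_range] at *; omega
        · intro t ht hnt
          simp only [Finset.mem_range] at ht hnt
          have e : n - 1 - t = 0 := by omega
          rw [e]; simp
      have eS2 : ∑ t ∈ Finset.range n, 2 * (cc t * ((n - 1 - t : ℕ) : ℝ))
          = 2 * gg n := by
        rw [← Finset.mul_sum, ident n n (by omega)]
      rw [eS1, eS2, ihn, sum_cc, Finset.sum_range_succ]
      ring

open Finset Pointwise

lemma phi_eq (a : ℕ) (ha : 1 ≤ a) : ∀ b : ℕ, a ≤ b →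
    ∑ t ∈ Finset.range (a-1), cc t * ((a-1-t : ℕ) : ℝ) * ((b-1-t : ℕ) : ℝ)
      = 2 * ∑ j ∈ Finset.range a, gg j + ((b:ℝ) - (a:ℝ) + 1) * gg a := by
  refine Nat.le_induction ?_ ?_
  · -- b = a
    have h := phi_diag a ha
    have : ∀ t ∈ Finset.range (a-1), cc t * ((a-1-t : ℕ) : ℝ) * ((a-1-t : ℕ) : ℝ)
        = cc t * ((a-1-t : ℕ) : ℝ)^2 := by intro t _; ring
    rw [Finset.sum_congr rfl this, h]
    ring
  · -- step b → b + 1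
    intro b hb ih
    have key : ∀ t ∈ Finset.range (a-1),
        cc t * ((a-1-t : ℕ) : ℝ) * ((b+1-1-t : ℕ) : ℝ)
          = cc t * ((a-1-t : ℕ) : ℝ) * ((b-1-t : ℕ) : ℝ) + cc t * ((a-1-t : ℕ) : ℝ) := by
      intro t ht
      simp only [Finset.mem_range] at ht
      have e : b + 1 - 1 - t = (b - 1 - t) + 1 := by omega
      rw [e]; push_cast; ring
    rw [Finset.sum_congr rfl key, Finset.sum_add_distrib, ih,
      ident (a-1) a (by omega)]
    push_cast
    ring

lemma W_le (A B : Finset ℤ) (hA : A.Nonempty) (hab : A.card ≤ B.card) :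
    ∑ k ∈ A + B, gg (repr' A B k)
      ≤ 2 * ∑ j ∈ Finset.range A.card, gg j + ((B.card:ℝ) - (A.card:ℝ) + 1) * gg A.card := by
  set a := A.card with hacard
  set b := B.card with hbcard
  have ha : 1 ≤ a := Finset.card_pos.mpr hA
  have step1 : ∀ k ∈ A + B, gg (repr' A B k)
      = ∑ t ∈ Finset.range (a-1), cc t * ((repr' A B k - 1 - t : ℕ) : ℝ) :=
    fun k _ => (ident (a-1) (repr' A B k) (by have := repr_le A B k; omega)).symm
  rw [Finset.sum_congr rfl step1, Finset.sum_comm]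
  have step2 : ∀ t ∈ Finset.range (a-1),
      ∑ k ∈ A + B, cc t * ((repr' A B k - 1 - t : ℕ) : ℝ)
        ≤ cc t * (((a-1-t : ℕ) : ℝ) * ((b-1-t : ℕ) : ℝ)) := by
    intro t ht
    rw [← Finset.mul_sum]
    apply mul_le_mul_of_nonneg_left _ (cc_nonneg t)
    have hsum := sum_repr_sub_le A B (t+1)
    have ecast : ∑ k ∈ A + B, ((repr' A B k - 1 - t : ℕ) : ℝ)
        = ((∑ k ∈ A + B, (repr' A B k - (t+1)) : ℕ) : ℝ) := by
      push_cast
      refine Finset.sum_congr rfl fun k _ => ?_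
      congr 1
      omega
    rw [ecast]
    have e2 : a - 1 - t = a - (t+1) := by omega
    have e3 : b - 1 - t = b - (t+1) := by omega
    rw [e2, e3, ← Nat.cast_mul]
    exact_mod_cast hsum
  calc ∑ t ∈ Finset.range (a-1), ∑ k ∈ A + B, cc t * ((repr' A B k - 1 - t : ℕ) : ℝ)
      ≤ ∑ t ∈ Finset.range (a-1), cc t * (((a-1-t : ℕ) : ℝ) * ((b-1-t : ℕ) : ℝ)) :=
        Finset.sum_le_sum step2
    _ = 2 * ∑ j ∈ Finset.range a, gg j + ((b:ℝ) - (a:ℝ) + 1) * gg a := by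
        rw [← phi_eq a ha b hab]
        refine Finset.sum_congr rfl fun t _ => by ring

open Finset Real

/-- `log (1+x) ≥ x - x²/2` for `x ≥ 0`. -/
lemma log_quad_lb (x : ℝ) (hx : 0 ≤ x) : x - x^2/2 ≤ Real.log (1+x) := by
  rcases eq_or_lt_of_le hx with rfl | hx'
  · simp
  have key : ∀ y ∈ Set.Icc (0:ℝ) x, HasDerivAt (fun y : ℝ => Real.log (1+y) - y + y^2/2)
      (1/(1+y) - 1 + y) y := by
    intro y hy
    have h1 : (0:ℝ) < 1 + y := by linarith [hy.1]
    have hlog : HasDerivAt (fun y : ℝ => Real.log (1+y)) (1/(1+y)) y := by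
      have := ((hasDerivAt_id y).const_add 1).log (by simp only [id_eq]; exact ne_of_gt h1)
      simpa using this
    have := (hlog.sub (hasDerivAt_id y)).add ((hasDerivAt_pow 2 y).div_const 2)
    exact this.congr_deriv (by norm_num)
  have hmono : MonotoneOn (fun y : ℝ => Real.log (1+y) - y + y^2/2) (Set.Icc 0 x) := by
    apply monotoneOn_of_deriv_nonneg (convex_Icc 0 x)
    · apply ContinuousOn.add (ContinuousOn.sub ?_ (continuousOn_id' _)) (by fun_prop)
      apply ContinuousOn.log (by fun_prop)
      intro y hy; simp only [Set.mem_Icc] at hy; intro h; linarith [hy.1]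
    · intro y hy
      rw [interior_Icc] at hy
      exact ((key y ⟨hy.1.le, hy.2.le⟩).differentiableAt).differentiableWithinAt
    · intro y hy
      rw [interior_Icc] at hy
      rw [(key y ⟨hy.1.le, hy.2.le⟩).deriv]
      have h1 : (0:ℝ) < 1 + y := by linarith [hy.1]
      have : 1/(1+y) - 1 + y = y^2/(1+y) := by field_simp; ring
      rw [this]; positivity
  have h0 : (fun y : ℝ => Real.log (1+y) - y + y^2/2) 0 ≤ (fun y : ℝ => Real.log (1+y) - y + y^2/2) x :=
    hmono (Set.left_mem_Icc.mpr hx) (Set.right_mem_Icc.mpr hx) hx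
  simp only [add_zero, Real.log_one] at h0
  norm_num at h0
  linarith

/-- `-log (1-x) ≥ x + x²/2` for `0 ≤ x < 1`. -/
lemma neg_log_quad_lb (x : ℝ) (hx : 0 ≤ x) (hx1 : x < 1) : x + x^2/2 ≤ -Real.log (1-x) := by
  rcases eq_or_lt_of_le hx with rfl | hx'
  · simp
  have key : ∀ y ∈ Set.Icc (0:ℝ) x, HasDerivAt (fun y : ℝ => -Real.log (1-y) - y - y^2/2)
      (1/(1-y) - 1 - y) y := by
    intro y hy
    have h1 : (0:ℝ) < 1 - y := by cases hy; linarith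
    have hlog : HasDerivAt (fun y : ℝ => Real.log (1-y)) (-(1/(1-y))) y := by
      have := ((hasDerivAt_id y).const_sub 1).log (by simp only [id_eq]; exact ne_of_gt h1)
      convert this using 1
      simp only [id_eq]
      field_simp
      rw [id_eq, div_self (ne_of_gt h1)]
    have := ((hlog.neg.sub (hasDerivAt_id y))).sub ((hasDerivAt_pow 2 y).div_const 2)
    exact this.congr_deriv (by norm_num)
  have hmono : MonotoneOn (fun y : ℝ => -Real.log (1-y) - y - y^2/2) (Set.Icc 0 x) := by
    apply monotoneOn_of_deriv_nonneg (convex_Icc 0 x)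
    · apply ContinuousOn.sub (ContinuousOn.sub ?_ (continuousOn_id' _)) (by fun_prop)
      apply ContinuousOn.neg
      apply ContinuousOn.log (by fun_prop)
      intro y hy; simp only [Set.mem_Icc] at hy; intro h; linarith [hy.2]
    · intro y hy
      rw [interior_Icc] at hy
      exact ((key y ⟨hy.1.le, hy.2.le⟩).differentiableAt).differentiableWithinAt
    · intro y hy
      rw [interior_Icc] at hy
      rw [(key y ⟨hy.1.le, hy.2.le⟩).deriv]
      have h1 : (0:ℝ) < 1 - y := by linarith [hy.2]
      have : 1/(1-y) - 1 - y = y^2/(1-y) := by field_simp; ring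
      rw [this]; positivity
  have h0 : (fun y : ℝ => -Real.log (1-y) - y - y^2/2) 0 ≤ (fun y : ℝ => -Real.log (1-y) - y - y^2/2) x :=
    hmono (Set.left_mem_Icc.mpr hx) (Set.right_mem_Icc.mpr hx) hx
  simp only [sub_zero, Real.log_one] at h0
  norm_num at h0
  linarith

/-- `exp x ≥ 1 + x + x²/2` for `x ≥ 0`. -/
lemma exp_quad_lb (x : ℝ) (hx : 0 ≤ x) : 1 + x + x^2/2 ≤ Real.exp x := by
  have h := Real.sum_le_exp_of_nonneg hx 3
  have : ∑ i ∈ Finset.range 3, x^i / (Nat.factorial i) = 1 + x + x^2/2 := by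
    rw [Finset.sum_range_succ, Finset.sum_range_succ, Finset.sum_range_one]
    norm_num [Nat.factorial]
  linarith [this ▸ h]

/-- midpoint inequality: `2n log n ≤ (n+1/2)² log(n+1/2) - (n-1/2)² log(n-1/2) - n` for `n ≥ 1`. -/
lemma midpoint_ineq (n : ℕ) (hn : 1 ≤ n) :
    2*(n:ℝ)*Real.log n ≤ ((n:ℝ)+1/2)^2 * Real.log ((n:ℝ)+1/2)
      - ((n:ℝ)-1/2)^2 * Real.log ((n:ℝ)-1/2) - n := by
  set x : ℝ := (n:ℝ) with hxdef
  have hx : (1:ℝ) ≤ x := by rw [hxdef]; exact_mod_cast hn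
  have hx0 : (0:ℝ) < x := by linarith
  set ε : ℝ := 1/(2*x) with hε
  have hε0 : 0 < ε := by positivity
  have hε1 : ε ≤ 1/2 := by rw [hε]; rw [div_le_div_iff₀ (by linarith) (by norm_num)]; linarith
  have hv : x + 1/2 = x * (1 + ε) := by rw [hε]; field_simp
  have hu : x - 1/2 = x * (1 - ε) := by rw [hε]; field_simp
  have hlogv : Real.log (x + 1/2) = Real.log x + Real.log (1 + ε) := by
    rw [hv, Real.log_mul (by linarith) (by linarith)]
  have hlogu : Real.log (x - 1/2) = Real.log x + Real.log (1 - ε) := by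
    rw [hu, Real.log_mul (by linarith) (by linarith)]
  rw [hlogv, hlogu]
  have h1 : (x+1/2)^2 * (ε - ε^2/2) ≤ (x+1/2)^2 * Real.log (1 + ε) :=
    mul_le_mul_of_nonneg_left (log_quad_lb ε hε0.le) (by positivity)
  have h2 : (x-1/2)^2 * Real.log (1 - ε) ≤ (x-1/2)^2 * (-(ε + ε^2/2)) := by
    apply mul_le_mul_of_nonneg_left _ (by positivity)
    have := neg_log_quad_lb ε hε0.le (by linarith)
    linarith
  have hQ : (x+1/2)^2 * (ε - ε^2/2) - (x-1/2)^2 * (-(ε + ε^2/2)) - x = 0 := by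
    rw [hε]; field_simp; ring
  nlinarith [h1, h2, hQ]

open Finset Real
set_option maxHeartbeats 1000000

lemma sum_gg_le : ∀ a : ℕ, 1 ≤ a →
    2 * ∑ j ∈ Finset.range a, gg j
      ≤ ((a:ℝ)-1/2)^2 * Real.log ((a:ℝ)-1/2) - ((a:ℝ)-1/2)^2/2 + (Real.log 2/4 + 1/8) := by
  refine Nat.le_induction ?_ ?_
  · simp only [Finset.range_one, Finset.sum_singleton, gg_zero]
    have : ((1:ℕ):ℝ) - 1/2 = 1/2 := by norm_num
    rw [this]
    have : Real.log (1/2 : ℝ) = -Real.log 2 := by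
      rw [one_div, Real.log_inv]
    rw [this]
    norm_num
    linarith
  · intro a ha ih
    rw [Finset.sum_range_succ]
    have hmid := midpoint_ineq a ha
    have egg : gg a = (a:ℝ) * Real.log a := rfl
    have e1 : ((a+1:ℕ):ℝ) - 1/2 = (a:ℝ) + 1/2 := by push_cast; ring
    rw [e1]
    nlinarith [hmid, ih]

lemma final_ineq (a b : ℕ) (ha : 1 ≤ a) (hab : a ≤ b) :
    (a:ℝ)^2 + (b:ℝ)^2 - 1
      ≤ ((a:ℝ)*(b:ℝ))^2 * Real.exp (-(2/((a:ℝ)*(b:ℝ)))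
          * (2 * ∑ j ∈ Finset.range a, gg j + ((b:ℝ)-(a:ℝ)+1) * gg a)) := by
  set x : ℝ := (a:ℝ) with hxdef
  set y : ℝ := (b:ℝ) with hydef
  have hx1 : (1:ℝ) ≤ x := by rw [hxdef]; exact_mod_cast ha
  have hy1 : (1:ℝ) ≤ y := by rw [hydef]; have : 1 ≤ b := le_trans ha hab; exact_mod_cast this
  have hxy : x ≤ y := by rw [hxdef, hydef]; exact_mod_cast hab
  have hx0 : (0:ℝ) < x := by linarith
  have hy0 : (0:ℝ) < y := by linarith
  set Sg : ℝ := ∑ j ∈ Finset.range a, gg j with hSg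
  have egg : gg a = x * Real.log x := by rw [hxdef]; rfl
  set S : ℝ := 2 * Sg + (y - x + 1) * gg a with hS
  set D : ℝ := x*(x-1)*Real.log x - 2*Sg with hD
  have hSD : S = x*y*Real.log x - D := by rw [hS, hD, egg]; ring
  have hexp : Real.exp (-(2/(x*y)) * S) = Real.exp (2*D/(x*y)) / (x*x) := by
    rw [hSD]
    have : -(2/(x*y)) * (x*y*Real.log x - D) = 2*D/(x*y) + (-(2*Real.log x)) := by
      field_simp; ring
    rw [this, Real.exp_add]
    congr 1
    rw [show -(2*Real.log x) = -Real.log x + -Real.log x by ring, Real.exp_add,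
      Real.exp_neg, Real.exp_log hx0]
    field_simp
  rw [hexp]
  rcases eq_or_lt_of_le ha with h1 | h1
  · -- a = 1
    have hSg0 : Sg = 0 := by rw [hSg, ← h1]; simp [gg_zero]
    have hx' : x = 1 := by rw [hxdef, ← h1]; norm_num
    have hD0 : D = 0 := by rw [hD, hSg0, hx']; ring
    rw [hD0, hx']
    simp
  · -- a ≥ 2
    have hx2 : (2:ℝ) ≤ x := by rw [hxdef]; exact_mod_cast h1
    set L : ℝ := Real.log x + Real.log 2 with hL
    -- lower bound on D
    have hDlb : x^2/2 - 3/8 - L/4 ≤ D := by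
      have hq := sum_gg_le a ha
      rw [← hxdef] at hq
      set u : ℝ := x - 1/2 with hu
      set ε : ℝ := 1/(2*x) with hε
      have hε0 : 0 < ε := by positivity
      have hε1 : ε < 1 := by
        rw [hε, div_lt_one (by linarith)]; linarith
      have huε : u = x * (1 - ε) := by rw [hu, hε]; field_simp
      have hlogu : Real.log u = Real.log x + Real.log (1 - ε) := by
        rw [huε, Real.log_mul (by linarith) (by nlinarith)]
      have hlog1ε := neg_log_quad_lb ε hε0.le hε1
      -- D = x(x-1) log x - 2Sg ≥ (u²-1/4) log x - (u² log u - u²/2 + K)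
      have hxx : x*(x-1) = u^2 - 1/4 := by rw [hu]; ring
      have hstep : D ≥ (u^2 - 1/4) * Real.log x - (u^2 * Real.log u - u^2/2 + (Real.log 2/4 + 1/8)) := by
        rw [hD, hxx]; linarith [hq]
      rw [hlogu] at hstep
      have hu2 : (0:ℝ) ≤ u^2 := sq_nonneg u
      have h2 : u^2 * Real.log (1-ε) ≤ u^2 * (-(ε + ε^2/2)) := by
        apply mul_le_mul_of_nonneg_left _ hu2
        linarith
      have hpoly : (u^2 - 1/4) * Real.log x - ((u^2 * Real.log x + u^2 * (-(ε+ε^2/2))) - u^2/2 + (Real.log 2/4 + 1/8))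
          = u^2*(ε+ε^2/2) + u^2/2 - Real.log x/4 - Real.log 2/4 - 1/8 := by ring
      have hval : u^2*(ε+ε^2/2) + u^2/2 - Real.log x/4 - Real.log 2/4 - 1/8
          ≥ x^2/2 - 3/8 - L/4 := by
        have : u^2*(ε+ε^2/2) + u^2/2 = x^2/2 - 1/4 + 1/(32*x^2) := by
          rw [hu, hε]; field_simp; ring
        rw [this, hL]
        have : 0 < 1/(32*x^2) := by positivity
        linarith
      nlinarith [hstep, h2, hval, hu2]
    have hD0 : 0 ≤ x^2/2 - 3/8 - L/4 := by
      have hlog2 : Real.log 2 ≤ 0.6932 := by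
        have := Real.log_two_lt_d9
        linarith
      have hlogx : Real.log x ≤ x - 1 := by
        have := Real.log_le_sub_one_of_pos hx0
        linarith
      rw [hL]; nlinarith
    set d : ℝ := x^2/2 - 3/8 - L/4 with hd
    have hw0 : 0 ≤ 2*d/(x*y) := by positivity
    have hwD : 2*d/(x*y) ≤ 2*D/(x*y) := by
      apply div_le_div_of_nonneg_right _ (by positivity)
      linarith
    have hexp_lb : 1 + 2*d/(x*y) + (2*d/(x*y))^2/2 ≤ Real.exp (2*D/(x*y)) := by
      calc 1 + 2*d/(x*y) + (2*d/(x*y))^2/2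
          ≤ 1 + 2*D/(x*y) + (2*D/(x*y))^2/2 := by nlinarith [hwD, hw0]
        _ ≤ Real.exp (2*D/(x*y)) := exp_quad_lb _ (le_trans hw0 hwD)
    -- final polynomial estimate
    have hLub : L ≤ x/2 + 2*Real.log 2 - 1 := by
      have : Real.log x - Real.log 2 = Real.log (x/2) := by
        rw [Real.log_div (by linarith) (by norm_num)]
      have h2 : Real.log (x/2) ≤ x/2 - 1 := by
        have := Real.log_le_sub_one_of_pos (show (0:ℝ) < x/2 by linarith)
        linarith
      rw [hL]; linarith
    have hL0 : 0 ≤ L := by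
      rw [hL]
      have h1 : 0 ≤ Real.log x := Real.log_nonneg hx1
      have h2 : 0 ≤ Real.log 2 := Real.log_nonneg (by norm_num)
      linarith
    have hlog2 : Real.log 2 ≤ 0.6932 := by linarith [Real.log_two_lt_d9]
    have hpoly2 : x^2 - 1 ≤ 2*d + 2*d^2/x^2 := by
      have hgap : 0 ≤ x/2 + 2*Real.log 2 - 1 - L := by linarith
      have hmain : (x^2-1)*x^2 ≤ (2*d)*x^2 + 2*d^2 := by
        rw [hd]
        nlinarith [mul_nonneg hgap hD0, mul_nonneg hgap (sq_nonneg x), sq_nonneg (x-2),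
          mul_nonneg hD0 hD0, sq_nonneg (x*x-2*x)]
      rw [← sub_nonneg]
      have e : 2*d + 2*d^2/x^2 - (x^2-1)
          = ((2*d)*x^2 + 2*d^2 - (x^2-1)*x^2)/x^2 := by
        field_simp
      rw [e]
      apply div_nonneg (by linarith [hmain]) (by positivity)
    -- assemble
    have key : x^2 + y^2 - 1 ≤ (x*y)^2 * ((1 + 2*d/(x*y) + (2*d/(x*y))^2/2) / (x*x)) := by
      have expand : (x*y)^2 * ((1 + 2*d/(x*y) + (2*d/(x*y))^2/2) / (x*x))
          = y^2 + 2*d*y/x + 2*d^2/x^2 := by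
        field_simp
      rw [expand]
      have hdyx : 2*d ≤ 2*d*y/x := by
        rw [le_div_iff₀ hx0]
        nlinarith [hD0, hxy]
      nlinarith [hpoly2, hdyx]
    calc x^2 + y^2 - 1 ≤ (x*y)^2 * ((1 + 2*d/(x*y) + (2*d/(x*y))^2/2) / (x*x)) := key
      _ ≤ (x*y)^2 * (Real.exp (2*D/(x*y)) / (x*x)) := by
          apply mul_le_mul_of_nonneg_left _ (by positivity)
          apply div_le_div_of_nonneg_right hexp_lb (by positivity)

open Finset Pointwise Real

lemma convZ_comm' (f g : ℤ → ℝ) : convZ f g = convZ g f := by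
  funext k
  unfold convZ
  rw [← (Equiv.subLeft k).tsum_eq (fun i => g i * f (k - i))]
  apply tsum_congr
  intro i
  simp only [Equiv.subLeft_apply, sub_sub_cancel]
  ring

lemma entZ_unif (A : Finset ℤ) (hA : A.Nonempty) : entZ (unif A) = Real.log A.card := by
  have hcard : (0:ℝ) < A.card := by exact_mod_cast Finset.card_pos.mpr hA
  unfold entZ
  rw [tsum_eq_sum (s := A) (fun i hi => by simp [unif, hi, Real.negMulLog_zero])]
  have : ∀ i ∈ A, Real.negMulLog (unif A i) = ((A.card:ℝ))⁻¹ * Real.log A.card := by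
    intro i hi
    simp only [unif, hi, if_true, Real.negMulLog, Real.log_inv]
    field_simp
  rw [Finset.sum_congr rfl this, Finset.sum_const, nsmul_eq_mul]
  field_simp

lemma exp_two_entZ_unif (A : Finset ℤ) (hA : A.Nonempty) :
    Real.exp (2 * entZ (unif A)) = (A.card:ℝ)^2 := by
  have hcard : (0:ℝ) < A.card := by exact_mod_cast Finset.card_pos.mpr hA
  rw [entZ_unif A hA, show (2:ℝ) * Real.log A.card = Real.log A.card + Real.log A.card by ring,
    Real.exp_add, Real.exp_log hcard]
  ring

lemma conv_apply (A B : Finset ℤ) (k : ℤ) :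
    convZ (unif A) (unif B) k = (repr' A B k : ℝ) / ((A.card:ℝ) * (B.card:ℝ)) := by
  unfold convZ
  rw [tsum_eq_sum (s := A) (fun i hi => by simp [unif, hi])]
  have : ∀ i ∈ A, unif A i * unif B (k - i)
      = if k - i ∈ B then ((A.card:ℝ))⁻¹ * ((B.card:ℝ))⁻¹ else 0 := by
    intro i hi
    simp only [unif, hi, if_true]
    by_cases h : k - i ∈ B <;> simp [h]
  rw [Finset.sum_congr rfl this, Finset.sum_ite, Finset.sum_const, Finset.sum_const]
  simp only [smul_zero, add_zero, nsmul_eq_mul]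
  rw [repr']
  rw [div_eq_mul_inv, mul_inv]

lemma repr_zero (A B : Finset ℤ) (k : ℤ) (hk : k ∉ A + B) : repr' A B k = 0 := by
  rw [repr', Finset.card_eq_zero]
  by_contra h
  obtain ⟨i, hi⟩ := Finset.nonempty_iff_ne_empty.mpr h
  simp only [Finset.mem_filter] at hi
  exact hk (by
    rw [Finset.mem_add]
    exact ⟨i, hi.1, k - i, hi.2, by ring⟩)

lemma exp_two_entZ_conv (A B : Finset ℤ) (hA : A.Nonempty) (hB : B.Nonempty) :
    Real.exp (2 * entZ (convZ (unif A) (unif B)))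
      = ((A.card:ℝ) * (B.card:ℝ))^2
        * Real.exp (-(2/((A.card:ℝ) * (B.card:ℝ))) * ∑ k ∈ A + B, gg (repr' A B k)) := by
  have ha : (0:ℝ) < A.card := by exact_mod_cast Finset.card_pos.mpr hA
  have hb : (0:ℝ) < B.card := by exact_mod_cast Finset.card_pos.mpr hB
  have hab : (0:ℝ) < (A.card:ℝ) * (B.card:ℝ) := by positivity
  set a : ℝ := (A.card:ℝ)
  set b : ℝ := (B.card:ℝ)
  have hent : entZ (convZ (unif A) (unif B))
      = Real.log (a*b) - (∑ k ∈ A + B, gg (repr' A B k)) / (a*b) := by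
    unfold entZ
    rw [tsum_eq_sum (s := A + B) (fun k hk => by
      rw [conv_apply, repr_zero A B k hk]
      simp [Real.negMulLog_zero])]
    have hterm : ∀ k ∈ A + B, Real.negMulLog (convZ (unif A) (unif B) k)
        = (repr' A B k : ℝ)/(a*b) * Real.log (a*b) - gg (repr' A B k) / (a*b) := by
      intro k hk
      rw [conv_apply]
      have hr : (0:ℝ) < (repr' A B k : ℝ) := by exact_mod_cast repr_pos A B k hk
      rw [Real.negMulLog, Real.log_div (by positivity) (by positivity)]
      rw [gg]
      field_simp
      ring
    rw [Finset.sum_congr rfl hterm, Finset.sum_sub_distrib, ← Finset.sum_div]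
    have hsum : ∑ k ∈ A + B, ((repr' A B k : ℝ)/(a*b) * Real.log (a*b))
        = Real.log (a*b) := by
      rw [← Finset.sum_mul, ← Finset.sum_div]
      have : ∑ k ∈ A + B, (repr' A B k : ℝ) = a * b := by
        rw [← Nat.cast_sum]
        rw [sum_repr A B]
        push_cast; ring
      rw [this]
      field_simp
    rw [hsum]
  rw [hent]
  have : 2 * (Real.log (a*b) - (∑ k ∈ A + B, gg (repr' A B k)) / (a*b))
      = (Real.log (a*b) + Real.log (a*b)) + (-(2/(a*b)) * ∑ k ∈ A + B, gg (repr' A B k)) := by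
    field_simp
    ring
  rw [this, Real.exp_add, Real.exp_add, Real.exp_log hab]
  ring

lemma main_aux (A B : Finset ℤ) (hA : A.Nonempty) (hB : B.Nonempty) (hab : A.card ≤ B.card) :
    (A.card:ℝ)^2 + (B.card:ℝ)^2 ≤ Real.exp (2 * entZ (convZ (unif A) (unif B))) + 1 := by
  have ha : (0:ℝ) < A.card := by exact_mod_cast Finset.card_pos.mpr hA
  have hb : (0:ℝ) < B.card := by exact_mod_cast Finset.card_pos.mpr hB
  have ha1 : 1 ≤ A.card := Finset.card_pos.mpr hA
  rw [exp_two_entZ_conv A B hA hB]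
  set a : ℝ := (A.card:ℝ)
  set b : ℝ := (B.card:ℝ)
  have hW := W_le A B hA hab
  have hmono : Real.exp (-(2/(a*b)) * ∑ k ∈ A + B, gg (repr' A B k))
      ≥ Real.exp (-(2/(a*b)) * (2 * ∑ j ∈ Finset.range A.card, gg j + (b - a + 1) * gg A.card)) := by
    apply Real.exp_le_exp.mpr
    apply mul_le_mul_of_nonpos_left hW
    have : (0:ℝ) < 2/(a*b) := by positivity
    linarith
  have hfin := final_ineq A.card B.card ha1 hab
  calc a^2 + b^2
      ≤ (a*b)^2 * Real.exp (-(2/(a*b)) * (2 * ∑ j ∈ Finset.range A.card, gg j + (b - a + 1) * gg A.card)) + 1 := by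
        linarith [hfin]
    _ ≤ (a*b)^2 * Real.exp (-(2/(a*b)) * ∑ k ∈ A + B, gg (repr' A B k)) + 1 := by
        have := mul_le_mul_of_nonneg_left hmono (by positivity : (0:ℝ) ≤ (a*b)^2)
        linarith

theorem discrete_EPI_uniform' (A B : Finset ℤ) (hA : A.Nonempty) (hB : B.Nonempty) :
    Real.exp (2 * entZ (unif A)) + Real.exp (2 * entZ (unif B)) ≤
      Real.exp (2 * entZ (convZ (unif A) (unif B))) + 1 := by
  rw [exp_two_entZ_unif A hA, exp_two_entZ_unif B hB]
  rcases le_total A.card B.card with h | h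
  · exact main_aux A B hA hB h
  · rw [convZ_comm']
    have := main_aux B A hB hA h
    linarith

/-- Discrete entropy power inequality for uniforms: if `X`, `Y` are independent and
uniform on finite sets `A, B ⊆ ℤ`, then `N(X+Y) + 1 ≥ N(X) + N(Y)` with `N = e^{2H}`. -/
theorem discrete_EPI_uniform (A B : Finset ℤ) (hA : A.Nonempty) (hB : B.Nonempty) :
    Real.exp (2 * entZ (unif A)) + Real.exp (2 * entZ (unif B)) ≤
      Real.exp (2 * entZ (convZ (unif A) (unif B))) + 1 :=
  discrete_EPI_uniform' A B hA hB
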